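/- arXiv:2301.02279 — 5 statements merged into one kernel-verified Lean document; each statement's English description precedes it below -/
import Mathlib

section
/- Let $(a_k)_{k\ge 1}$ be a non-negative sequence and let $0 < s < t < 1$ with $s + t > 1$. Suppose there exist positive constants $c, d$ such that $a_{k+1} \le (1 - c/k^s) a_k + d/k^{t+s}$ for all $k \ge 1$. Then there exist a positive integer $K$ with $K > cK^{1-s} \ge 1$ and nonnegative constants $c_\star, d_\star$ such that for all $k \ge K$, $a_k \le c_\star / k^{t+s-1} + d_\star / k$. -/
open Real

theorem stmt1 (a : ℕ → ℝ) (s t c d : ℝ)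
    (ha : ∀ k, 0 ≤ a k)
    (hs : 0 < s) (hst : s < t) (ht : t < 1) (hsum : 1 < s + t)
    (hc : 0 < c) (hd : 0 < d)
    (hrec : ∀ k : ℕ, 1 ≤ k → a (k + 1) ≤ (1 - c / (k : ℝ) ^ s) * a k + d / (k : ℝ) ^ (t + s)) :
    ∃ K : ℕ, (c * (K : ℝ) ^ (1 - s) < K ∧ 1 ≤ c * (K : ℝ) ^ (1 - s)) ∧
      ∃ cstar dstar : ℝ, 0 ≤ cstar ∧ 0 ≤ dstar ∧
        ∀ k : ℕ, K ≤ k → a k ≤ cstar / (k : ℝ) ^ (t + s - 1) + dstar / (k : ℝ) := by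
  have hs1 : s < 1 := hst.trans ht
  set p : ℝ := t + s - 1 with hpdef
  have hp0 : 0 < p := by simp only [hpdef]; linarith
  have hp1 : p < 1 := by simp only [hpdef]; linarith
  set B : ℝ := max ((1/c) ^ ((1-s)⁻¹)) (c ^ (s⁻¹)) with hB
  set K : ℕ := ⌈B⌉₊ + 1 with hKdef
  have hKB : B < (K : ℝ) := by
    have := Nat.le_ceil B
    push_cast [hKdef]
    linarith
  have hK1 : (1:ℝ) ≤ (K : ℝ) := by
    have : 1 ≤ K := by omega
    exact_mod_cast this
  have hK0 : (0:ℝ) < (K : ℝ) := by linarith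
  -- c < K ^ s
  have hcs : c < (K : ℝ) ^ s := by
    have h1 : c ^ (s⁻¹) < (K : ℝ) := lt_of_le_of_lt (le_max_right _ _) hKB
    have h2 : (c ^ (s⁻¹)) ^ s < (K : ℝ) ^ s :=
      Real.rpow_lt_rpow (Real.rpow_nonneg hc.le _) h1 hs
    rwa [Real.rpow_inv_rpow hc.le hs.ne'] at h2
  -- 1/c ≤ K ^ (1-s)
  have hK1s : 1/c ≤ (K : ℝ) ^ (1-s) := by
    have h1 : (1/c) ^ ((1-s)⁻¹) ≤ (K : ℝ) := (le_max_left _ _).trans hKB.le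
    have h2 : ((1/c) ^ ((1-s)⁻¹)) ^ (1-s) ≤ (K : ℝ) ^ (1-s) :=
      Real.rpow_le_rpow (Real.rpow_nonneg (by positivity) _) h1 (by linarith)
    rwa [Real.rpow_inv_rpow (by positivity) (by intro h; linarith [h])] at h2
  have hone : 1 ≤ c * (K : ℝ) ^ (1-s) := by
    have := mul_le_mul_of_nonneg_left hK1s hc.le
    rwa [mul_one_div, div_self hc.ne'] at this
  have hlt : c * (K : ℝ) ^ (1-s) < (K : ℝ) := by
    have hpow : (0:ℝ) < (K : ℝ) ^ (1-s) := Real.rpow_pos_of_pos hK0 _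
    have h2 : c * (K : ℝ) ^ (1-s) < (K : ℝ) ^ s * (K : ℝ) ^ (1-s) :=
      mul_lt_mul_of_pos_right hcs hpow
    have h3 : (K : ℝ) ^ s * (K : ℝ) ^ (1-s) = (K : ℝ) := by
      rw [← Real.rpow_add hK0]
      norm_num
    linarith
  have haKp : 0 ≤ a K * (K : ℝ) ^ p := mul_nonneg (ha K) (Real.rpow_pos_of_pos hK0 _).le
  refine ⟨K, ⟨hlt, hone⟩, max (d / (1 - p)) (a K * (K : ℝ) ^ p), 0, ?_, le_refl 0, ?_⟩
  · exact le_trans haKp (le_max_right _ _)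
  set cstar : ℝ := max (d / (1 - p)) (a K * (K : ℝ) ^ p) with hcstar
  have hcstar0 : 0 ≤ cstar := le_trans haKp (le_max_right _ _)
  have hdle : d ≤ cstar * (1 - p) := by
    have h1 : d / (1 - p) ≤ cstar := le_max_left _ _
    rw [div_le_iff₀ (by linarith)] at h1
    linarith
  -- main induction
  have main : ∀ k : ℕ, K ≤ k → a k ≤ cstar / (k : ℝ) ^ p := by
    intro k hk
    induction k, hk using Nat.le_induction with
    | base =>
      rw [le_div_iff₀ (Real.rpow_pos_of_pos hK0 _)]
      exact le_max_right _ _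
    | succ k hk IH =>
      have hkR1 : (1:ℝ) ≤ (k : ℝ) := le_trans hK1 (by exact_mod_cast hk)
      have hk0 : (0:ℝ) < (k : ℝ) := by linarith
      have hKk : (K : ℝ) ≤ (k : ℝ) := by exact_mod_cast hk
      have hknat : 1 ≤ k := le_trans (by omega) hk
      have hrk := hrec k hknat
      have hcontr : 0 ≤ 1 - c / (k : ℝ) ^ s := by
        have h1 : (K : ℝ) ^ s ≤ (k : ℝ) ^ s := Real.rpow_le_rpow hK0.le hKk hs.le
        have h2 : c < (k : ℝ) ^ s := lt_of_lt_of_le hcs h1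
        have h3 : c / (k : ℝ) ^ s ≤ 1 := by
          rw [div_le_one (lt_of_le_of_lt hc.le h2)]; exact h2.le
        linarith
      -- step 1: a(k+1) ≤ (1 - c/k^s) * (cstar/k^p) + d/k^(p+1)
      have hts : (k : ℝ) ^ (t + s) = (k : ℝ) ^ (p + 1) := by
        congr 1; simp only [hpdef]; ring
      have step1 : a (k+1) ≤ (1 - c / (k:ℝ)^s) * (cstar / (k:ℝ)^p) + d / (k:ℝ)^(p+1) := by
        calc a (k+1) ≤ (1 - c / (k:ℝ)^s) * a k + d / (k:ℝ)^(t+s) := hrk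
          _ ≤ (1 - c / (k:ℝ)^s) * (cstar / (k:ℝ)^p) + d / (k:ℝ)^(p+1) := by
              rw [hts]
              exact add_le_add_left (mul_le_mul_of_nonneg_left IH hcontr) _
      -- rewrite the contraction product
      have hexp : (1 - c / (k:ℝ)^s) * (cstar / (k:ℝ)^p)
          = cstar / (k:ℝ)^p - cstar * c / (k:ℝ)^(p+s) := by
        rw [Real.rpow_add hk0]
        have hps : (0:ℝ) < (k:ℝ)^p := Real.rpow_pos_of_pos hk0 _
        have hss : (0:ℝ) < (k:ℝ)^s := Real.rpow_pos_of_pos hk0 _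
        field_simp
      -- Claim 1 : d/k^(p+1) ≤ cstar*c/k^(p+s) - cstar*p/k^(p+1)
      have hpow1 : (0:ℝ) < (k:ℝ)^(p+1) := Real.rpow_pos_of_pos hk0 _
      have hpowps : (0:ℝ) < (k:ℝ)^(p+s) := Real.rpow_pos_of_pos hk0 _
      have hpow1s : (0:ℝ) < (k:ℝ)^(1-s) := Real.rpow_pos_of_pos hk0 _
      have ed : cstar * p + d ≤ cstar * c * (k:ℝ)^(1-s) := by
        have h1 : (K:ℝ)^(1-s) ≤ (k:ℝ)^(1-s) := Real.rpow_le_rpow hK0.le hKk (by linarith)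
        calc cstar * p + d ≤ cstar * p + cstar * (1 - p) := by linarith
          _ = cstar := by ring
          _ ≤ cstar * (c * (K:ℝ)^(1-s)) := le_mul_of_one_le_right hcstar0 hone
          _ ≤ cstar * (c * (k:ℝ)^(1-s)) :=
              mul_le_mul_of_nonneg_left (mul_le_mul_of_nonneg_left h1 hc.le) hcstar0
          _ = cstar * c * (k:ℝ)^(1-s) := by ring
      have claim1 : d / (k:ℝ)^(p+1) ≤ cstar * c / (k:ℝ)^(p+s) - cstar * p / (k:ℝ)^(p+1) := by
        have e3 : (k:ℝ)^(p+1) = (k:ℝ)^(p+s) * (k:ℝ)^(1-s) := by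
          rw [← Real.rpow_add hk0]; ring_nf
        have h : (cstar * p + d) / (k:ℝ)^(p+1) ≤ cstar * c / (k:ℝ)^(p+s) := by
          rw [div_le_div_iff₀ hpow1 hpowps]
          calc (cstar * p + d) * (k:ℝ)^(p+s)
              ≤ (cstar * c * (k:ℝ)^(1-s)) * (k:ℝ)^(p+s) :=
                mul_le_mul_of_nonneg_right ed hpowps.le
            _ = cstar * c * ((k:ℝ)^(p+s) * (k:ℝ)^(1-s)) := by ring
            _ = cstar * c * (k:ℝ)^(p+1) := by rw [← e3]
        rw [add_div] at h
        linarith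
      -- Claim 2 : cstar/k^p - cstar*p/k^(p+1) ≤ cstar/(k+1)^p
      have hA : ((k:ℝ)+1)^p ≤ (k:ℝ)^p + p * (k:ℝ)^(p-1) := by
        have hb : (1 + 1/(k:ℝ))^p ≤ 1 + p * (1/(k:ℝ)) :=
          rpow_one_add_le_one_add_mul_self
            (by
              have h : (0:ℝ) ≤ 1/(k:ℝ) := by positivity
              linarith) hp0.le hp1.le
        have he : (k:ℝ) + 1 = (k:ℝ) * (1 + 1/(k:ℝ)) := by field_simp
        rw [he, Real.mul_rpow hk0.le (by positivity)]
        have := mul_le_mul_of_nonneg_left hb (Real.rpow_pos_of_pos hk0 p).le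
        calc (k:ℝ)^p * (1 + 1/(k:ℝ))^p ≤ (k:ℝ)^p * (1 + p * (1/(k:ℝ))) := this
          _ = (k:ℝ)^p + p * ((k:ℝ)^p / (k:ℝ)) := by ring
          _ = (k:ℝ)^p + p * (k:ℝ)^(p-1) := by rw [← Real.rpow_sub_one hk0.ne']
      have hk1pos : (0:ℝ) < ((k:ℝ)+1)^p := Real.rpow_pos_of_pos (by linarith) _
      have hkp : (0:ℝ) < (k:ℝ)^p := Real.rpow_pos_of_pos hk0 _
      have claim2 : cstar / (k:ℝ)^p - cstar * p / (k:ℝ)^(p+1) ≤ cstar / ((k:ℝ)+1)^p := by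
        have hX : 1 / (k:ℝ)^p - p / (k:ℝ)^(p+1) ≤ 1 / ((k:ℝ)+1)^p := by
          rcases le_or_gt (1 / (k:ℝ)^p - p / (k:ℝ)^(p+1)) 0 with hneg | hpos
          · have h0 : (0:ℝ) ≤ 1 / ((k:ℝ)+1)^p := by positivity
            linarith
          · rw [le_div_iff₀ hk1pos]
            calc (1 / (k:ℝ)^p - p / (k:ℝ)^(p+1)) * ((k:ℝ)+1)^p
                ≤ (1 / (k:ℝ)^p - p / (k:ℝ)^(p+1)) * ((k:ℝ)^p + p * (k:ℝ)^(p-1)) :=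
                  mul_le_mul_of_nonneg_left hA hpos.le
              _ ≤ 1 := by
                  have e1 : (k:ℝ)^(p+1) = (k:ℝ)^p * (k:ℝ) := Real.rpow_add_one hk0.ne' p
                  have e2 : (k:ℝ)^(p-1) = (k:ℝ)^p / (k:ℝ) := Real.rpow_sub_one hk0.ne' p
                  rw [e1, e2]
                  have key : (1 / (k:ℝ)^p - p / ((k:ℝ)^p * (k:ℝ))) * ((k:ℝ)^p + p * ((k:ℝ)^p / (k:ℝ)))
                      = 1 - p^2 / (k:ℝ)^2 := by
                    field_simp
                    ring
                  rw [key]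
                  have : 0 ≤ p^2 / (k:ℝ)^2 := by positivity
                  linarith
        have := mul_le_mul_of_nonneg_left hX hcstar0
        calc cstar / (k:ℝ)^p - cstar * p / (k:ℝ)^(p+1)
            = cstar * (1 / (k:ℝ)^p - p / (k:ℝ)^(p+1)) := by ring
          _ ≤ cstar * (1 / ((k:ℝ)+1)^p) := this
          _ = cstar / ((k:ℝ)+1)^p := by ring
      have hcast : ((k+1 : ℕ) : ℝ) = (k:ℝ) + 1 := by push_cast; ring
      rw [hcast]
      calc a (k+1) ≤ (1 - c / (k:ℝ)^s) * (cstar / (k:ℝ)^p) + d / (k:ℝ)^(p+1) := step1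
        _ = cstar / (k:ℝ)^p - cstar * c / (k:ℝ)^(p+s) + d / (k:ℝ)^(p+1) := by rw [hexp]
        _ ≤ cstar / (k:ℝ)^p - cstar * p / (k:ℝ)^(p+1) := by linarith
        _ ≤ cstar / ((k:ℝ)+1)^p := claim2
  intro k hk
  have := main k hk
  simpa using this.trans (by simp)
end

section
/- Let $(a_k)$ be a non-negative sequence, $0 < s < t < 1$, $s+t>1$, and positive constants $c,d$ with $a_{k+1} \le (1 - c/k^s)a_k + d/k^{t+s}$ for all $k\ge 1$. Fix an integer $K$ with $K > cK^{1-s} \ge 1$ and set $\tilde c = \lfloor cK^{1-s}\rfloor$ and $p = t+s-1$. Then for all $k \ge K$, $a_{k+1} - \frac{d}{\tilde c - p}\cdot\frac{1}{(k+1)^p} \le \left(1 - \frac{\tilde c}{k}\right)\left(a_k - \frac{d}{\tilde c - p}\cdot\frac{1}{k^p}\right)$. -/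
theorem stmt2 (a : ℕ → ℝ) (s t c d : ℝ) (K : ℕ)
    (ha : ∀ k, 0 ≤ a k)
    (hs : 0 < s) (hst : s < t) (ht : t < 1) (hsum : 1 < s + t)
    (hc : 0 < c) (hd : 0 < d)
    (hrec : ∀ k : ℕ, 1 ≤ k → a (k + 1) ≤ (1 - c / (k : ℝ) ^ s) * a k + d / (k : ℝ) ^ (t + s))
    (hK1 : c * (K : ℝ) ^ (1 - s) < K) (hK2 : 1 ≤ c * (K : ℝ) ^ (1 - s)) :
    ∀ k : ℕ, K ≤ k →
      a (k + 1) - d / ((⌊c * (K : ℝ) ^ (1 - s)⌋ : ℝ) - (t + s - 1)) * (1 / ((k : ℝ) + 1) ^ (t + s - 1)) ≤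
        (1 - (⌊c * (K : ℝ) ^ (1 - s)⌋ : ℝ) / (k : ℝ)) *
          (a k - d / ((⌊c * (K : ℝ) ^ (1 - s)⌋ : ℝ) - (t + s - 1)) * (1 / (k : ℝ) ^ (t + s - 1))) := by
  intro k hk
  set p : ℝ := t + s - 1 with hpdef
  set C : ℝ := (⌊c * (K : ℝ) ^ (1 - s)⌋ : ℝ) with hCdef
  have hp0 : 0 < p := by rw [hpdef]; linarith
  have hp1 : p < 1 := by rw [hpdef]; linarith
  have hC1 : (1 : ℝ) ≤ C := by
    rw [hCdef]
    exact_mod_cast Int.le_floor.mpr (by exact_mod_cast hK2)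
  have hCle : C ≤ c * (K : ℝ) ^ (1 - s) := Int.floor_le _
  have hCK : C < (K : ℝ) := lt_of_le_of_lt hCle hK1
  have hkK : (K : ℝ) ≤ (k : ℝ) := Nat.cast_le.mpr hk
  set x : ℝ := (k : ℝ) with hxdef
  clear_value C
  have hx1 : (1 : ℝ) ≤ x := by linarith
  have hx0 : (0 : ℝ) < x := by linarith
  have hxne : x ≠ 0 := ne_of_gt hx0
  have hk1 : 1 ≤ k := le_trans (by exact_mod_cast hC1.trans hCK.le : 1 ≤ K) hk
  clear_value x p
  have hCx : C < x := lt_of_lt_of_le hCK hkK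
  -- compare c/x^s with C/x
  have hxs : (0 : ℝ) < x ^ s := Real.rpow_pos_of_pos hx0 s
  have hfrac : C / x ≤ c / x ^ s := by
    have h1 : C ≤ c * x ^ (1 - s) := by
      refine hCle.trans ?_
      have : (K : ℝ) ^ (1 - s) ≤ x ^ (1 - s) :=
        Real.rpow_le_rpow (Nat.cast_nonneg K) hkK (by linarith)
      nlinarith
    have h2 : c * x ^ (1 - s) / x = c / x ^ s := by
      rw [Real.rpow_sub hx0, Real.rpow_one]
      field_simp
    rw [← h2]
    gcongr
  have hrec' : a (k + 1) ≤ (1 - C / x) * a k + d / x ^ (t + s) := by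
    have h0 := hrec k hk1
    rw [← hxdef] at h0
    have : (1 - c / x ^ s) * a k ≤ (1 - C / x) * a k :=
      mul_le_mul_of_nonneg_right (by linarith) (ha k)
    linarith
  -- Bernoulli : (x+1)^p ≤ x^p * (1 + p/x)
  have hxp : (0 : ℝ) < x ^ p := Real.rpow_pos_of_pos hx0 p
  have hx1p : (0 : ℝ) < (x + 1) ^ p := Real.rpow_pos_of_pos (by linarith) p
  have hb : (1 + 1 / x) ^ p ≤ 1 + p * (1 / x) :=
    rpow_one_add_le_one_add_mul_self (by nlinarith [one_div_pos.mpr hx0]) hp0.le hp1.le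
  have hmul : (x + 1) ^ p ≤ x ^ p * (1 + p / x) := by
    have hsplit : (x + 1 : ℝ) = x * (1 + 1 / x) := by field_simp
    rw [hsplit, Real.mul_rpow hx0.le (by positivity)]
    have := mul_le_mul_of_nonneg_left hb hxp.le
    calc x ^ p * (1 + 1 / x) ^ p ≤ x ^ p * (1 + p * (1 / x)) := this
      _ = x ^ p * (1 + p / x) := by ring
  have hkey : (x + 1) ^ p * (1 - p / x) ≤ x ^ p := by
    have hpx : 0 ≤ 1 - p / x := by
      have : p / x ≤ 1 := by
        rw [div_le_one hx0]; linarith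
      linarith
    have hpx2 : 0 ≤ p / x := by positivity
    nlinarith [mul_le_mul_of_nonneg_right hmul hpx, sq_nonneg (p / x)]
  have hinv : (1 - p / x) * (1 / x ^ p) ≤ 1 / (x + 1) ^ p := by
    rw [mul_one_div, div_le_div_iff₀ hxp hx1p, one_mul]
    calc (1 - p / x) * (x + 1) ^ p = (x + 1) ^ p * (1 - p / x) := by ring
      _ ≤ x ^ p := hkey
  -- main estimate
  have hCp : (0 : ℝ) < C - p := by linarith
  have hD : (0 : ℝ) < d / (C - p) := div_pos hd hCp
  have h5 : d / (C - p) * ((1 - p / x) * (1 / x ^ p)) ≤ d / (C - p) * (1 / (x + 1) ^ p) :=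
    mul_le_mul_of_nonneg_left hinv hD.le
  have hxts : x ^ (t + s) = x ^ p * x := by
    have h : t + s = p + 1 := by rw [hpdef]; ring
    rw [h, Real.rpow_add hx0, Real.rpow_one]
  have h6 : d / (C - p) * ((1 - p / x) * (1 / x ^ p)) -
      (1 - C / x) * (d / (C - p) * (1 / x ^ p)) = d / x ^ (t + s) := by
    rw [hxts]
    field_simp
    ring
  have hmain : d / x ^ (t + s) ≤
      d / (C - p) * (1 / (x + 1) ^ p) - (1 - C / x) * (d / (C - p) * (1 / x ^ p)) := by
    linarith
  have hgoal : a (k + 1) - d / (C - p) * (1 / (x + 1) ^ p) ≤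
      (1 - C / x) * (a k - d / (C - p) * (1 / x ^ p)) := by
    rw [mul_sub]
    linarith
  exact hgoal
end

section
/- Let $\mathcal{X} \subseteq \mathbb{R}^n$ be nonempty, convex, and compact, and let $F : \mathcal{X} \to \mathbb{R}^n$ be continuous and pseudo-monotone plus, i.e., (a) for all $x, y \in \mathcal{X}$, $\langle F(y), x - y\rangle \ge 0$ implies $\langle F(x), x - y\rangle \ge 0$, and (b) for all $x, y \in \mathcal{X}$, $\langle F(y), x - y\rangle \ge 0$ and $\langle F(x), x - y\rangle = 0$ together imply $F(x) = F(y)$. Suppose $x_* \in \mathcal{X}$ satisfies $\langle F(x_*), x - x_*\rangle \ge 0$ for all $x \in \mathcal{X}$ (i.e., $x_*$ is a critical point), and suppose $x^\dagger \in \mathcal{X}$ satisfies $\langle F(x^\dagger), x^\dagger - x_*\rangle = 0$. Then $x^\dagger$ is also a critical point: $\langle F(x^\dagger), x - x^\dagger\rangle \ge 0$ for all $x \in \mathcal{X}$. -/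
open scoped RealInnerProductSpace

theorem stmt4 {n : ℕ} (X : Set (EuclideanSpace ℝ (Fin n)))
    (F : EuclideanSpace ℝ (Fin n) → EuclideanSpace ℝ (Fin n))
    (hne : X.Nonempty) (hconv : Convex ℝ X) (hcomp : IsCompact X)
    (hcont : ContinuousOn F X)
    (hpm : ∀ x ∈ X, ∀ y ∈ X, 0 ≤ ⟪F y, x - y⟫ → 0 ≤ ⟪F x, x - y⟫)
    (hplus : ∀ x ∈ X, ∀ y ∈ X, 0 ≤ ⟪F y, x - y⟫ → ⟪F x, x - y⟫ = 0 → F x = F y)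
    (xstar : EuclideanSpace ℝ (Fin n)) (hxstar : xstar ∈ X)
    (hcrit : ∀ x ∈ X, 0 ≤ ⟪F xstar, x - xstar⟫)
    (xdag : EuclideanSpace ℝ (Fin n)) (hxdag : xdag ∈ X)
    (horth : ⟪F xdag, xdag - xstar⟫ = 0) :
    ∀ x ∈ X, 0 ≤ ⟪F xdag, x - xdag⟫ := by
  have h1 : 0 ≤ ⟪F xstar, xdag - xstar⟫ := hcrit xdag hxdag
  have heq : F xdag = F xstar := hplus xdag hxdag xstar hxstar h1 horth
  intro x hx
  have h2 : 0 ≤ ⟪F xstar, x - xstar⟫ := hcrit x hx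
  have h3 : ⟪F xstar, xdag - xstar⟫ = 0 := heq ▸ horth
  have : ⟪F xstar, x - xdag⟫ = ⟪F xstar, x - xstar⟫ - ⟪F xstar, xdag - xstar⟫ := by
    rw [← inner_sub_right]; congr 1; abel
  rw [heq, this, h3]
  linarith
end

section
/- Let $\mathcal{S}_2 \subseteq \mathcal{S}_1 \subseteq \mathbb{R}^n$ be closed convex sets, $\psi$ a differentiable $\tilde\mu$-strongly convex function on a convex set containing $\mathcal{S}_1$, with Bregman divergence $D$. For $x$ in the domain and $y_1, y_2 \in \mathbb{R}^n$, define $x_1^+ = \arg\min_{x'\in\mathcal{S}_1}\{\langle y_1, x - x'\rangle + D(x', x)\}$ and $x_2^+ = \arg\min_{x'\in\mathcal{S}_2}\{\langle y_2, x - x'\rangle + D(x', x)\}$. Then for any $p \in \mathcal{S}_2$: $D(p, x_2^+) \le D(p, x) + \langle y_2, x_1^+ - p\rangle + \frac{1}{2\tilde\mu}\|y_2 - y_1\|_*^2 - \frac{\tilde\mu}{2}\|x_1^+ - x\|^2$. -/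
open scoped RealInnerProductSpace
open Filter Set Topology

variable {E : Type*} [NormedAddCommGroup E] [InnerProductSpace ℝ E] [CompleteSpace E]

lemma lineDeriv' (ψ : E → ℝ) (b v : E) (hd : DifferentiableAt ℝ ψ b) :
    HasDerivAt (fun t : ℝ => ψ (b + t • v)) ⟪gradient ψ b, v⟫ 0 := by
  have h1 : HasFDerivAt ψ (InnerProductSpace.toDual ℝ E (gradient ψ b)) b :=
    hd.hasGradientAt.hasFDerivAt
  have h2 : HasDerivAt (fun t : ℝ => b + t • v) v 0 := by
    simpa using ((hasDerivAt_id (0:ℝ)).smul_const v).const_add b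
  have h1' : HasFDerivAt ψ (InnerProductSpace.toDual ℝ E (gradient ψ b)) ((fun t : ℝ => b + t • v) 0) := by
    simpa using h1
  have h4 := h1'.comp_hasDerivAt 0 h2
  rw [InnerProductSpace.toDual_apply_apply] at h4
  exact h4

lemma bregman_lb' {C : Set E} {μ : ℝ} {ψ : E → ℝ} (hsc : StrongConvexOn C μ ψ)
    (a b : E) (ha : a ∈ C) (hb : b ∈ C) (hd : DifferentiableAt ℝ ψ b) :
    μ / 2 * ‖a - b‖ ^ 2 ≤ ψ a - ψ b - ⟪gradient ψ b, a - b⟫ := by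
  rcases eq_or_ne a b with rfl | hab
  · simp
  have hder := lineDeriv' ψ b (a - b) hd
  have hslope : Tendsto (fun t : ℝ => (ψ (b + t • (a - b)) - ψ b) / t) (𝓝[>] (0:ℝ))
      (𝓝 ⟪gradient ψ b, a - b⟫) := by
    have := (hasDerivAt_iff_tendsto_slope.1 hder).mono_left
      (nhdsWithin_mono _ fun t ht => ne_of_gt ht)
    refine this.congr' ?_
    filter_upwards [self_mem_nhdsWithin] with t (ht : (0:ℝ) < t)
    simp [slope_def_field]
  have hrhs : Tendsto (fun t : ℝ => ψ a - ψ b - (1 - t) * (μ / 2 * ‖a - b‖ ^ 2)) (𝓝[>] (0:ℝ))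
      (𝓝 (ψ a - ψ b - (1 - 0) * (μ / 2 * ‖a - b‖ ^ 2))) := by
    apply Tendsto.mono_left _ nhdsWithin_le_nhds
    exact (tendsto_const_nhds.sub ((tendsto_const_nhds.sub tendsto_id).mul tendsto_const_nhds))
  have hle : ⟪gradient ψ b, a - b⟫ ≤ ψ a - ψ b - (1 - 0) * (μ / 2 * ‖a - b‖ ^ 2) := by
    refine le_of_tendsto_of_tendsto hslope hrhs ?_
    filter_upwards [Ioo_mem_nhdsGT_of_mem (left_mem_Ico.2 zero_lt_one)] with t ht
    have hcvx := hsc.2 hb ha (show (0:ℝ) ≤ 1 - t by linarith [ht.2]) ht.1.le (show 1 - t + t = 1 by ring)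
    have hpt : (1 - t) • b + t • a = b + t • (a - b) := by module
    rw [hpt] at hcvx
    rw [div_le_iff₀ ht.1]
    have hnorm : ‖b - a‖ = ‖a - b‖ := norm_sub_rev b a
    simp only [smul_eq_mul] at hcvx
    rw [hnorm] at hcvx
    nlinarith [ht.1, ht.2]
  linarith

lemma foc' {S : Set E} (hconv : Convex ℝ S) {F : E → ℝ} {z p : E} (hz : z ∈ S) (hp : p ∈ S)
    (hmin : ∀ w ∈ S, F z ≤ F w) {d : ℝ}
    (hder : HasDerivAt (fun t : ℝ => F (z + t • (p - z))) d 0) : 0 ≤ d := by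
  have hslope : Tendsto (fun t : ℝ => (F (z + t • (p - z)) - F z) / t) (𝓝[>] (0:ℝ)) (𝓝 d) := by
    have := (hasDerivAt_iff_tendsto_slope.1 hder).mono_left
      (nhdsWithin_mono _ fun t ht => ne_of_gt ht)
    refine this.congr' ?_
    filter_upwards [self_mem_nhdsWithin] with t ht
    simp [slope_def_field]
  refine ge_of_tendsto hslope ?_
  filter_upwards [Ioo_mem_nhdsGT_of_mem (left_mem_Ico.2 zero_lt_one)] with t ht
  have hmem : z + t • (p - z) ∈ S := by
    have h := hconv hz hp (show (0:ℝ) ≤ 1 - t by linarith [ht.2]) ht.1.le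
      (show 1 - t + t = 1 by ring)
    have hpt : (1 - t) • z + t • p = z + t • (p - z) := by module
    rwa [hpt] at h
  exact div_nonneg (sub_nonneg.2 (hmin _ hmem)) ht.1.le

lemma objDeriv (ψ : E → ℝ) (y x gx z v : E) (hd : DifferentiableAt ℝ ψ z) :
    HasDerivAt (fun t : ℝ => ⟪y, x - (z + t • v)⟫ + (ψ (z + t • v) - ψ x - ⟪gx, z + t • v - x⟫))
      (⟪gradient ψ z, v⟫ - ⟪y, v⟫ - ⟪gx, v⟫) 0 := by
  have h1 := lineDeriv' ψ z v hd
  have h2 : HasDerivAt (fun t : ℝ => ⟪y, x - (z + t • v)⟫) (-⟪y, v⟫) 0 := by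
    have he : (fun t : ℝ => ⟪y, x - (z + t • v)⟫) = fun t : ℝ => ⟪y, x - z⟫ - t * ⟪y, v⟫ := by
      funext t
      rw [show x - (z + t • v) = (x - z) - t • v by abel, inner_sub_right,
        real_inner_smul_right]
    rw [he]
    simpa using ((hasDerivAt_id (0:ℝ)).mul_const ⟪y, v⟫).const_sub ⟪y, x - z⟫
  have h3 : HasDerivAt (fun t : ℝ => ⟪gx, z + t • v - x⟫) (⟪gx, v⟫) 0 := by
    have he : (fun t : ℝ => ⟪gx, z + t • v - x⟫) = fun t : ℝ => ⟪gx, z - x⟫ + t * ⟪gx, v⟫ := by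
      funext t
      rw [show z + t • v - x = (z - x) + t • v by abel, inner_add_right,
        real_inner_smul_right]
    rw [he]
    simpa using ((hasDerivAt_id (0:ℝ)).mul_const ⟪gx, v⟫).const_add ⟪gx, z - x⟫
  have := h2.add ((h1.sub_const (ψ x)).sub h3)
  exact this.congr_deriv (by ring)


theorem stmt11 {n : ℕ} (S₁ S₂ C : Set (EuclideanSpace ℝ (Fin n)))
    (ψ : EuclideanSpace ℝ (Fin n) → ℝ) (μ : ℝ) (hμ : 0 < μ)
    (hS21 : S₂ ⊆ S₁) (hS1C : S₁ ⊆ C)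
    (hS₁closed : IsClosed S₁) (hS₁conv : Convex ℝ S₁)
    (hS₂closed : IsClosed S₂) (hS₂conv : Convex ℝ S₂)
    (hCconv : Convex ℝ C)
    (hdiff : ∀ z ∈ C, DifferentiableAt ℝ ψ z)
    (hsc : StrongConvexOn C μ ψ)
    (Dv : EuclideanSpace ℝ (Fin n) → EuclideanSpace ℝ (Fin n) → ℝ)
    (hDv : ∀ p z, Dv p z = ψ p - ψ z - ⟪gradient ψ z, p - z⟫)
    (x y₁ y₂ x₁p x₂p : EuclideanSpace ℝ (Fin n)) (hx : x ∈ C)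
    (hx₁p : x₁p ∈ S₁)
    (hmin₁ : ∀ x' ∈ S₁, ⟪y₁, x - x₁p⟫ + Dv x₁p x ≤ ⟪y₁, x - x'⟫ + Dv x' x)
    (hx₂p : x₂p ∈ S₂)
    (hmin₂ : ∀ x' ∈ S₂, ⟪y₂, x - x₂p⟫ + Dv x₂p x ≤ ⟪y₂, x - x'⟫ + Dv x' x) :
    ∀ p ∈ S₂,
      Dv p x₂p ≤ Dv p x + ⟪y₂, x₁p - p⟫ + 1 / (2 * μ) * ‖y₂ - y₁‖ ^ 2
        - μ / 2 * ‖x₁p - x‖ ^ 2 := by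
  intro p hp
  have hx1C : x₁p ∈ C := hS1C hx₁p
  have hx2C : x₂p ∈ C := hS1C (hS21 hx₂p)
  -- first-order optimality for x₂p in direction p
  have foc2 : 0 ≤ ⟪gradient ψ x₂p, p - x₂p⟫ - ⟪y₂, p - x₂p⟫ - ⟪gradient ψ x, p - x₂p⟫ := by
    refine foc' (F := fun x' => ⟪y₂, x - x'⟫ + Dv x' x) hS₂conv hx₂p hp
      (fun w hw => hmin₂ w hw) ?_
    have hder := objDeriv ψ y₂ x (gradient ψ x) x₂p (p - x₂p) (hdiff _ hx2C)
    refine hder.congr_of_eventuallyEq (Eventually.of_forall fun t => ?_)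
    simp only [hDv]
  -- first-order optimality for x₁p in direction x₂p
  have foc1 : 0 ≤ ⟪gradient ψ x₁p, x₂p - x₁p⟫ - ⟪y₁, x₂p - x₁p⟫ - ⟪gradient ψ x, x₂p - x₁p⟫ := by
    refine foc' (F := fun x' => ⟪y₁, x - x'⟫ + Dv x' x) hS₁conv hx₁p (hS21 hx₂p)
      (fun w hw => hmin₁ w hw) ?_
    have hder := objDeriv ψ y₁ x (gradient ψ x) x₁p (x₂p - x₁p) (hdiff _ hx1C)
    refine hder.congr_of_eventuallyEq (Eventually.of_forall fun t => ?_)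
    simp only [hDv]
  have B1 := bregman_lb' hsc x₂p x₁p hx2C hx1C (hdiff _ hx1C)
  have B2 := bregman_lb' hsc x₁p x hx1C hx (hdiff _ hx)
  -- Young's inequality
  have hμ2 : (0:ℝ) < 2 * μ := by linarith
  have Y : ⟪y₂ - y₁, x₂p - x₁p⟫ ≤ 1 / (2 * μ) * ‖y₂ - y₁‖ ^ 2 + μ / 2 * ‖x₂p - x₁p‖ ^ 2 := by
    have h := real_inner_le_norm (y₂ - y₁) (x₂p - x₁p)
    have hsq := sq_nonneg (‖y₂ - y₁‖ - μ * ‖x₂p - x₁p‖)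
    have hkey : ⟪y₂ - y₁, x₂p - x₁p⟫ * (2 * μ) ≤ ‖y₂ - y₁‖ ^ 2 + μ ^ 2 * ‖x₂p - x₁p‖ ^ 2 := by
      nlinarith [norm_nonneg (y₂ - y₁), norm_nonneg (x₂p - x₁p)]
    have h2 : ⟪y₂ - y₁, x₂p - x₁p⟫ ≤ (‖y₂ - y₁‖ ^ 2 + μ ^ 2 * ‖x₂p - x₁p‖ ^ 2) / (2 * μ) := by
      rw [le_div_iff₀ hμ2]; exact hkey
    have h3 : (‖y₂ - y₁‖ ^ 2 + μ ^ 2 * ‖x₂p - x₁p‖ ^ 2) / (2 * μ)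
        = 1 / (2 * μ) * ‖y₂ - y₁‖ ^ 2 + μ / 2 * ‖x₂p - x₁p‖ ^ 2 := by
      field_simp
    linarith
  rw [hDv, hDv]
  simp only [inner_sub_left, inner_sub_right] at foc1 foc2 B1 B2 Y ⊢
  linarith
end

section
/- Let $\mathcal{S}_2 \subseteq \mathcal{S}_1$ be closed convex subsets of $\mathbb{R}^n$, $\psi$ differentiable and strictly convex with Bregman divergence $D$, and define prox-mappings $x_1^+ = P_{x,\mathcal{S}_1}(y_1)$, $x_2^+ = P_{x,\mathcal{S}_2}(y_2)$ as in the generalized mirror step. Then for any $p \in \mathcal{S}_2$: $D(p, x_2^+) \le D(p, x) + \langle y_2, x_1^+ - p\rangle + \langle y_1 - y_2, x_1^+ - x_2^+\rangle - D(x_2^+, x_1^+) - D(x_1^+, x)$. -/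
open scoped RealInnerProductSpace
open Filter Set

/-- Directional derivative as a one-sided limit of difference quotients. -/
lemma dirDeriv_tendsto {E : Type*} [NormedAddCommGroup E] [InnerProductSpace ℝ E]
    [CompleteSpace E] {f : E → ℝ} {z : E} (h : DifferentiableAt ℝ f z) (v : E) :
    Tendsto (fun t : ℝ => (f (z + t • v) - f z) / t) (nhdsWithin 0 (Set.Ioi 0))
      (nhds ⟪gradient f z, v⟫) := by
  have hφ : HasDerivAt (fun t : ℝ => z + t • v) v 0 := by
    simpa using ((hasDerivAt_id (0 : ℝ)).smul_const v).const_add z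
  have hc : HasDerivAt (fun t : ℝ => f (z + t • v)) (fderiv ℝ f z v) 0 := by
    have hf : HasFDerivAt f (fderiv ℝ f z) ((fun t : ℝ => z + t • v) 0) := by
      simpa using h.hasFDerivAt
    exact hf.comp_hasDerivAt 0 hφ
  have hinner : ⟪gradient f z, v⟫ = fderiv ℝ f z v := by
    simp [gradient, InnerProductSpace.toDual_symm_apply]
  rw [hinner]
  have hslope := hasDerivAt_iff_tendsto_slope.1 hc
  have hmono : nhdsWithin (0:ℝ) (Set.Ioi 0) ≤ nhdsWithin (0:ℝ) {(0:ℝ)}ᶜ :=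
    nhdsWithin_mono 0 (fun t ht => ne_of_gt ht)
  refine (hslope.mono_left hmono).congr (fun t => ?_)
  simp [slope_def_field, div_eq_inv_mul, mul_comm]

/-- Variational inequality from minimality of `f - ⟪w, ·⟫` over a convex set. -/
lemma var_ineq {E : Type*} [NormedAddCommGroup E] [InnerProductSpace ℝ E]
    [CompleteSpace E] {S : Set E} (hS : Convex ℝ S) {f : E → ℝ} {w z p : E}
    (hz : z ∈ S) (hp : p ∈ S) (hd : DifferentiableAt ℝ f z)
    (hmin : ∀ x' ∈ S, f z - ⟪w, z⟫ ≤ f x' - ⟪w, x'⟫) :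
    ⟪w, p - z⟫ ≤ ⟪gradient f z, p - z⟫ := by
  refine ge_of_tendsto (dirDeriv_tendsto hd (p - z)) ?_
  filter_upwards [Ioc_mem_nhdsGT one_pos] with t ht
  have hmem : z + t • (p - z) ∈ S := by
    have h := hS hz hp (by linarith [ht.1, ht.2] : (0:ℝ) ≤ 1 - t)
      (le_of_lt ht.1) (by ring)
    have : (1 - t) • z + t • p = z + t • (p - z) := by
      rw [smul_sub, sub_smul, one_smul]; abel
    rwa [this] at h
  have h1 := hmin _ hmem
  rw [le_div_iff₀ ht.1]
  have hexp : ⟪w, z + t • (p - z)⟫ = ⟪w, z⟫ + t * ⟪w, p - z⟫ := by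
    rw [inner_add_right, real_inner_smul_right]
  rw [hexp] at h1
  linarith

theorem stmt12 {n : ℕ} (S₁ S₂ C : Set (EuclideanSpace ℝ (Fin n)))
    (ψ : EuclideanSpace ℝ (Fin n) → ℝ)
    (hS21 : S₂ ⊆ S₁) (hS1C : S₁ ⊆ C)
    (hS₁closed : IsClosed S₁) (hS₁conv : Convex ℝ S₁)
    (hS₂closed : IsClosed S₂) (hS₂conv : Convex ℝ S₂)
    (hCconv : Convex ℝ C)
    (hdiff : ∀ z ∈ C, DifferentiableAt ℝ ψ z)
    (hstrict : StrictConvexOn ℝ C ψ)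
    (Dv : EuclideanSpace ℝ (Fin n) → EuclideanSpace ℝ (Fin n) → ℝ)
    (hDv : ∀ p z, Dv p z = ψ p - ψ z - ⟪gradient ψ z, p - z⟫)
    (x y₁ y₂ x₁p x₂p : EuclideanSpace ℝ (Fin n)) (hx : x ∈ C)
    (hx₁p : x₁p ∈ S₁)
    (hmin₁ : ∀ x' ∈ S₁, ⟪y₁, x - x₁p⟫ + Dv x₁p x ≤ ⟪y₁, x - x'⟫ + Dv x' x)
    (hx₂p : x₂p ∈ S₂)
    (hmin₂ : ∀ x' ∈ S₂, ⟪y₂, x - x₂p⟫ + Dv x₂p x ≤ ⟪y₂, x - x'⟫ + Dv x' x) :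
    ∀ p ∈ S₂,
      Dv p x₂p ≤ Dv p x + ⟪y₂, x₁p - p⟫ + ⟪y₁ - y₂, x₁p - x₂p⟫
        - Dv x₂p x₁p - Dv x₁p x := by
  intro p hp
  set g := gradient ψ
  -- rewrite minimality in the form f - ⟪w, ·⟫
  have hmin₁' : ∀ x' ∈ S₁, ψ x₁p - ⟪y₁ + g x, x₁p⟫ ≤ ψ x' - ⟪y₁ + g x, x'⟫ := by
    intro x' hx'
    have h := hmin₁ x' hx'
    simp only [hDv, inner_sub_right, inner_add_left] at h ⊢
    linarith
  have hmin₂' : ∀ x' ∈ S₂, ψ x₂p - ⟪y₂ + g x, x₂p⟫ ≤ ψ x' - ⟪y₂ + g x, x'⟫ := by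
    intro x' hx'
    have h := hmin₂ x' hx'
    simp only [hDv, inner_sub_right, inner_add_left] at h ⊢
    linarith
  have hd₁ : DifferentiableAt ℝ ψ x₁p := hdiff _ (hS1C hx₁p)
  have hd₂ : DifferentiableAt ℝ ψ x₂p := hdiff _ (hS1C (hS21 hx₂p))
  have VI₁ : ⟪y₁ + g x, x₂p - x₁p⟫ ≤ ⟪g x₁p, x₂p - x₁p⟫ :=
    var_ineq hS₁conv hx₁p (hS21 hx₂p) hd₁ hmin₁'
  have VI₂ : ⟪y₂ + g x, p - x₂p⟫ ≤ ⟪g x₂p, p - x₂p⟫ :=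
    var_ineq hS₂conv hx₂p hp hd₂ hmin₂'
  simp only [hDv, inner_sub_left, inner_sub_right, inner_add_left] at VI₁ VI₂ ⊢
  linarith
end
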